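/- Suppose the block matrix Z = [[MᵀM − P, MᵀN],[NᵀM, NᵀN − Θ]] with P, Θ symmetric positive definite is negative semidefinite and P ≤ ϑ I with 0 < ϑ < 1. If moreover ξ(t)ᵀ ξ(t) ≤ δ for all t and Tr(Θ) ≤ θ̄, then the recursion e(t) = M e(t-1) + N ξ(t-1) satisfies limsup_{t→∞} ‖e(t)‖² ≤ λ_max(Θ) δ /(1−ϑ) ≤ θ̄ δ /(1−ϑ). -/

import Mathlib

open Matrix Filter

lemma aux_trace_eq {k : ℕ} {A : Matrix (Fin k) (Fin k) ℝ} (hA : A.IsHermitian) :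
    A.trace = ∑ i, hA.eigenvalues i := by
  conv_lhs => rw [hA.spectral_theorem, Unitary.conjStarAlgAut_apply]
  rw [Matrix.trace_mul_cycle,
    (Matrix.mem_unitaryGroup_iff').mp (Matrix.IsHermitian.eigenvectorUnitary hA).2, Matrix.one_mul,
    Matrix.trace_diagonal]
  simp

lemma aux_rayleigh {k : ℕ} {A : Matrix (Fin k) (Fin k) ℝ} (hA : A.IsHermitian) (x : Fin k → ℝ) :
    x ⬝ᵥ A *ᵥ x ≤ (⨆ i, hA.eigenvalues i) * (x ⬝ᵥ x) := by
  set U : Matrix (Fin k) (Fin k) ℝ := (Matrix.IsHermitian.eigenvectorUnitary hA : Matrix (Fin k) (Fin k) ℝ) with hU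
  set y : Fin k → ℝ := Uᵀ *ᵥ x with hy
  have hstar : star U = Uᵀ := Matrix.conjTranspose_eq_transpose_of_trivial U
  have hUUt : U * Uᵀ = 1 := by
    rw [← hstar]; exact (Matrix.mem_unitaryGroup_iff).mp (Matrix.IsHermitian.eigenvectorUnitary hA).2
  have hUy : U *ᵥ y = x := by
    rw [hy, Matrix.mulVec_mulVec, hUUt, Matrix.one_mulVec]
  have hxx : x ⬝ᵥ x = y ⬝ᵥ y := by
    rw [hy, Matrix.dotProduct_mulVec, Matrix.vecMul_transpose, hUy, dotProduct_comm]
  have hxAx : x ⬝ᵥ A *ᵥ x = ∑ i, hA.eigenvalues i * (y i)^2 := by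
    conv_lhs => rw [hA.spectral_theorem, Unitary.conjStarAlgAut_apply, hstar]
    rw [← Matrix.mulVec_mulVec, ← Matrix.mulVec_mulVec, Matrix.dotProduct_mulVec (v := x),
      ← Matrix.mulVec_transpose]
    rw [← hy]
    simp only [dotProduct, Matrix.mulVec_diagonal, Function.comp_apply,
      RCLike.ofReal_real_eq_id, id_eq]
    exact Finset.sum_congr rfl fun i _ => by ring
  have hle : ∀ i, hA.eigenvalues i ≤ ⨆ j, hA.eigenvalues j := fun i =>
    le_ciSup (Set.Finite.bddAbove (Set.finite_range _)) i
  calc x ⬝ᵥ A *ᵥ x = ∑ i, hA.eigenvalues i * (y i)^2 := hxAx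
    _ ≤ ∑ i, (⨆ j, hA.eigenvalues j) * (y i)^2 :=
        Finset.sum_le_sum fun i _ => mul_le_mul_of_nonneg_right (hle i) (sq_nonneg _)
    _ = (⨆ j, hA.eigenvalues j) * (y ⬝ᵥ y) := by
        rw [← Finset.mul_sum]; congr 1; simp [dotProduct, sq]
    _ = (⨆ j, hA.eigenvalues j) * (x ⬝ᵥ x) := by rw [hxx]

/-- If `Z = [[MᵀM − P, MᵀN],[NᵀM, NᵀN − Θ]]` is negative semidefinite,
`P ≤ ϑI` with `0 < ϑ < 1`, `ξ(t)ᵀξ(t) ≤ δ`, and `Tr Θ ≤ θ̄`, then the recursion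
`e(t) = M e(t-1) + N ξ(t-1)` satisfies
`limsup ‖e(t)‖² ≤ λ_max(Θ) δ/(1-ϑ) ≤ θ̄ δ/(1-ϑ)`. -/
theorem stmt_12 {n m : ℕ} (M P : Matrix (Fin n) (Fin n) ℝ) (N : Matrix (Fin n) (Fin m) ℝ)
    (Θ : Matrix (Fin m) (Fin m) ℝ) (hP : P.PosDef) (hΘ : Θ.PosDef)
    (hZ : (-(Matrix.fromBlocks (Mᵀ * M - P) (Mᵀ * N) (Nᵀ * M) (Nᵀ * N - Θ))).PosSemidef)
    (ϑ : ℝ) (hϑ0 : 0 < ϑ) (hϑ1 : ϑ < 1)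
    (hPϑ : (ϑ • (1 : Matrix (Fin n) (Fin n) ℝ) - P).PosSemidef)
    (δ θb : ℝ) (ξ : ℕ → Fin m → ℝ) (hξ : ∀ t, ξ t ⬝ᵥ ξ t ≤ δ)
    (hΘtr : Θ.trace ≤ θb) (e : ℕ → Fin n → ℝ)
    (hrec : ∀ t : ℕ, 1 ≤ t → e t = M.mulVec (e (t - 1)) + N.mulVec (ξ (t - 1))) :
    limsup (fun t => e t ⬝ᵥ e t) atTop ≤ (⨆ i, hΘ.1.eigenvalues i) * δ / (1 - ϑ) ∧
      (⨆ i, hΘ.1.eigenvalues i) * δ / (1 - ϑ) ≤ θb * δ / (1 - ϑ) := by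
  have hdp : ∀ {k : ℕ} (v : Fin k → ℝ), 0 ≤ v ⬝ᵥ v := fun v =>
    Finset.sum_nonneg fun i _ => mul_self_nonneg _
  have hδ0 : 0 ≤ δ := le_trans (hdp (ξ 0)) (hξ 0)
  set lam : ℝ := ⨆ i, hΘ.1.eigenvalues i with hlam
  have hlam0 : 0 ≤ lam := Real.iSup_nonneg fun i => (hΘ.eigenvalues_pos i).le
  have hϑ1' : (0:ℝ) < 1 - ϑ := by linarith
  -- key quadratic inequality from Z ⪯ 0
  have key : ∀ (x : Fin n → ℝ) (u : Fin m → ℝ),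
      (M *ᵥ x + N *ᵥ u) ⬝ᵥ (M *ᵥ x + N *ᵥ u) ≤ x ⬝ᵥ P *ᵥ x + u ⬝ᵥ Θ *ᵥ u := by
    intro x u
    have h := hZ.dotProduct_mulVec_nonneg (Sum.elim x u)
    simp only [star_trivial, Matrix.neg_mulVec, dotProduct_neg, Matrix.fromBlocks_mulVec,
      Matrix.sub_mulVec, sumElim_dotProduct_sumElim, dotProduct_add,
      dotProduct_sub, ← Matrix.mulVec_mulVec, Matrix.dotProduct_mulVec (v := x),
      Matrix.dotProduct_mulVec (v := u), Matrix.vecMul_transpose, add_dotProduct,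
      dotProduct_comm (N *ᵥ u) (M *ᵥ x), Sum.elim_comp_inl, Sum.elim_comp_inr] at h ⊢
    linarith [h]
  have hPbound : ∀ x : Fin n → ℝ, x ⬝ᵥ P *ᵥ x ≤ ϑ * (x ⬝ᵥ x) := by
    intro x
    have h := hPϑ.dotProduct_mulVec_nonneg x
    simp only [star_trivial, Matrix.sub_mulVec, dotProduct_sub, Matrix.smul_mulVec,
      Matrix.one_mulVec, dotProduct_smul, smul_eq_mul] at h
    linarith
  have hΘbound : ∀ t, ξ t ⬝ᵥ Θ *ᵥ ξ t ≤ lam * δ := fun t =>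
    (aux_rayleigh hΘ.1 (ξ t)).trans (mul_le_mul_of_nonneg_left (hξ t) hlam0)
  set a : ℕ → ℝ := fun t => e t ⬝ᵥ e t with ha
  have hstep : ∀ t, a (t + 1) ≤ ϑ * a t + lam * δ := by
    intro t
    have he := hrec (t + 1) (by omega)
    simp only [Nat.add_sub_cancel] at he
    show e (t+1) ⬝ᵥ e (t+1) ≤ _
    rw [he]
    exact (key (e t) (ξ t)).trans (add_le_add (hPbound (e t)) (hΘbound t))
  set K : ℝ := lam * δ / (1 - ϑ) with hK
  have hK0 : 0 ≤ K := div_nonneg (mul_nonneg hlam0 hδ0) hϑ1'.le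
  have hKe : ϑ * K + lam * δ = K := by
    have : (1 - ϑ) * K = lam * δ := by rw [hK, mul_div_cancel₀ _ (ne_of_gt hϑ1')]
    linarith
  have hbound : ∀ t, a t ≤ ϑ ^ t * a 0 + K := by
    intro t
    induction t with
    | zero => simp only [pow_zero, one_mul]; linarith
    | succ t ih =>
      calc a (t + 1) ≤ ϑ * a t + lam * δ := hstep t
        _ ≤ ϑ * (ϑ ^ t * a 0 + K) + lam * δ := by nlinarith
        _ = ϑ ^ (t + 1) * a 0 + K := by rw [pow_succ]; linarith [hKe]
  have htend : Tendsto (fun t : ℕ => ϑ ^ t * a 0 + K) atTop (nhds K) := by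
    have h0 : Tendsto (fun t : ℕ => ϑ ^ t) atTop (nhds 0) :=
      tendsto_pow_atTop_nhds_zero_of_lt_one hϑ0.le hϑ1
    simpa using (h0.mul_const (a 0)).add_const K
  have h1 : limsup a atTop ≤ K := by
    have hcob : IsCoboundedUnder (· ≤ ·) atTop a :=
      (isBoundedUnder_of ⟨0, fun t => hdp (e t)⟩ :
        IsBoundedUnder (· ≥ ·) atTop a).isCoboundedUnder_le
    calc limsup a atTop ≤ limsup (fun t : ℕ => ϑ ^ t * a 0 + K) atTop :=
          limsup_le_limsup (Eventually.of_forall hbound) hcob htend.isBoundedUnder_le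
      _ = K := htend.limsup_eq
  have hsum : lam ≤ θb := by
    have htr := aux_trace_eq hΘ.1
    have hl : lam ≤ Θ.trace := by
      rw [htr]
      refine Real.iSup_le (fun i => ?_) ?_
      · exact Finset.single_le_sum (f := hΘ.1.eigenvalues)
          (fun j _ => (hΘ.eigenvalues_pos j).le) (Finset.mem_univ i)
      · exact Finset.sum_nonneg fun j _ => (hΘ.eigenvalues_pos j).le
    linarith
  exact ⟨h1, div_le_div_of_nonneg_right (mul_le_mul_of_nonneg_right hsum hδ0) hϑ1'.le⟩
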